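/- Contractivity of ODEs via logarithmic Lipschitz constants: let X(t) and Y(t) be two solutions of the ODE ẋ = F(x, t) remaining in a set Y ⊆ ℝⁿ on [0, T], where F(·, t) has s-lub logarithmic Lipschitz constant at most c uniformly in t (c ∈ ℝ). Then for all t ∈ [0, T], ‖X(t) − Y(t)‖_X ≤ e^{ct}·‖X(0) − Y(0)‖_X. In particular, if c < 0 the solutions converge to each other exponentially. -/

import Mathlib

open Filter Topology

/-- The incremental quotient whose limit as `h → 0⁺` (then sup over pairs) defines
the s-lub logarithmic Lipschitz constant `M⁺_X[G]`. -/
noncomputable def llQuot {X : Type*} [NormedAddCommGroup X] [NormedSpace ℝ X]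
    (G : X → X) (u v : X) (h : ℝ) : ℝ :=
  (‖u - v + h • (G u - G v)‖ / ‖u - v‖ - 1) / h

section aux

open Set

variable {E : Type*} [NormedAddCommGroup E] [NormedSpace ℝ E]

lemma aux_mono (w D : E) :
    MonotoneOn (fun h : ℝ => (‖w + h • D‖ - ‖w‖) / h) (Ioi 0) := by
  intro a ha b hb hab
  simp only [mem_Ioi] at ha hb
  have hb0 : b ≠ 0 := ne_of_gt hb
  have key : b * ‖w + a • D‖ ≤ (b - a) * ‖w‖ + a * ‖w + b • D‖ := by
    have heq : b • (w + a • D) = (b - a) • w + a • (w + b • D) := by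
      module
    have h1 : (0:ℝ) ≤ b - a := sub_nonneg.mpr hab
    calc b * ‖w + a • D‖ = ‖b • (w + a • D)‖ := by
          rw [norm_smul, Real.norm_of_nonneg hb.le]
      _ = ‖(b - a) • w + a • (w + b • D)‖ := by rw [heq]
      _ ≤ ‖(b - a) • w‖ + ‖a • (w + b • D)‖ := norm_add_le _ _
      _ = (b - a) * ‖w‖ + a * ‖w + b • D‖ := by
          rw [norm_smul, norm_smul, Real.norm_of_nonneg h1, Real.norm_of_nonneg ha.le]
  rw [div_le_div_iff₀ ha hb]
  linarith

lemma aux_bdd (w D : E) : BddBelow ((fun h : ℝ => (‖w + h • D‖ - ‖w‖) / h) '' Ioi 0) := by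
  refine ⟨-‖D‖, ?_⟩
  rintro r ⟨h, hh, rfl⟩
  simp only [mem_Ioi] at hh
  have h2 := abs_norm_sub_norm_le (w + h • D) w
  rw [add_sub_cancel_left, abs_le, norm_smul, Real.norm_of_nonneg hh.le] at h2
  rw [le_div_iff₀ hh]
  nlinarith [h2.1]

lemma aux_tendsto (w D : E) : ∃ L : ℝ,
    Tendsto (fun h : ℝ => (‖w + h • D‖ - ‖w‖) / h) (𝓝[>] (0:ℝ)) (𝓝 L) :=
  ⟨_, (aux_mono w D).tendsto_nhdsGT (aux_bdd w D)⟩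

end aux

/-- Contractivity of ODEs via logarithmic Lipschitz constants: if the s-lub
logarithmic Lipschitz constant of `F(·, t)` on `S` is at most `c` uniformly in `t`,
then any two solutions `x, y` of `ẋ = F(x, t)` remaining in `S` on `[0, T]` satisfy
`‖x t − y t‖ ≤ e^{c t} ‖x 0 − y 0‖`. -/
theorem stmt12 {E : Type*} [NormedAddCommGroup E] [NormedSpace ℝ E]
    [FiniteDimensional ℝ E] (S : Set E) (F : E → ℝ → E) (c : ℝ) (T : ℝ) (hT : 0 ≤ T)
    (hreg_x : ∀ t ∈ Set.Icc 0 T, ContDiffOn ℝ 1 (fun z => F z t) S)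
    (hreg_t : ∀ z ∈ S, ContinuousOn (F z) (Set.Icc 0 T))
    (hLip : ∀ t ∈ Set.Icc 0 T, ∀ u ∈ S, ∀ v ∈ S, u ≠ v → ∀ L : ℝ,
      Tendsto (llQuot (fun z => F z t) u v) (𝓝[>] (0:ℝ)) (𝓝 L) → L ≤ c)
    (x y : ℝ → E)
    (hx : ∀ t ∈ Set.Icc 0 T, HasDerivAt x (F (x t) t) t ∧ x t ∈ S)
    (hy : ∀ t ∈ Set.Icc 0 T, HasDerivAt y (F (y t) t) t ∧ y t ∈ S) :
    ∀ t ∈ Set.Icc 0 T, ‖x t - y t‖ ≤ Real.exp (c * t) * ‖x 0 - y 0‖ := by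
  intro t ht
  have main := le_gronwallBound_of_liminf_deriv_right_le (f := fun s => ‖x s - y s‖)
    (f' := fun s => c * ‖x s - y s‖) (δ := ‖x 0 - y 0‖) (K := c) (ε := 0) (a := 0) (b := T)
    ?_ ?_ le_rfl ?_ t ht
  · rw [sub_zero, gronwallBound_ε0] at main
    linarith
  · exact continuous_norm.comp_continuousOn (fun s hs =>
      (((hx s hs).1.sub (hy s hs).1).continuousAt.continuousWithinAt))
  · -- liminf slope condition
    intro s hs r hr
    have hsIcc : s ∈ Set.Icc 0 T := Set.Ico_subset_Icc_self hs
    set g : ℝ → E := fun z => x z - y z with hgdef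
    have hg : HasDerivAt g (F (x s) s - F (y s) s) s :=
      (hx s hsIcc).1.sub (hy s hsIcc).1
    set w := x s - y s with hw
    set D := F (x s) s - F (y s) s with hD
    set q : ℝ → ℝ := fun h => (‖w + h • D‖ - ‖w‖) / h with hq
    obtain ⟨L, hLt⟩ := aux_tendsto w D
    have hr' : c * ‖w‖ < r := hr
    have hslope : Tendsto (slope g s) (𝓝[>] s) (𝓝 D) :=
      (hasDerivAt_iff_tendsto_slope.1 hg).mono_left
        (nhdsWithin_mono _ fun z hz => ne_of_gt hz)
    -- L < r
    have hLr : L < r := by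
      by_cases hxy : x s = y s
      · have hw0 : w = 0 := by rw [hw, hxy, sub_self]
        have hD0 : D = 0 := by rw [hD, hxy, sub_self]
        have hq0 : ∀ h ∈ Set.Ioi (0:ℝ), q h = 0 := by
          intro h hh
          simp [hq, hw0, hD0]
        have : Tendsto q (𝓝[>] (0:ℝ)) (𝓝 0) := by
          refine Tendsto.congr' ?_ tendsto_const_nhds
          filter_upwards [self_mem_nhdsWithin] with h hh
          exact (hq0 h hh).symm
        have hL0 : L = 0 := tendsto_nhds_unique hLt this
        rw [hw0, norm_zero, mul_zero] at hr'
        linarith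
      · have hwne : w ≠ 0 := fun h => hxy (by rwa [hw, sub_eq_zero] at h)
        have hwpos : (0:ℝ) < ‖w‖ := norm_pos_iff.mpr hwne
        have hquot : Tendsto (llQuot (fun z => F z s) (x s) (y s)) (𝓝[>] (0:ℝ))
            (𝓝 (L / ‖w‖)) := by
          have : llQuot (fun z => F z s) (x s) (y s) = fun h => q h / ‖w‖ := by
            funext h
            show (‖w + h • D‖ / ‖w‖ - 1) / h = (‖w + h • D‖ - ‖w‖) / h / ‖w‖
            rw [div_sub_one (ne_of_gt hwpos)]
            ring
          rw [this]
          exact hLt.div_const _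
        have := hLip s hsIcc (x s) (hx s hsIcc).2 (y s) (hy s hsIcc).2 hxy _ hquot
        have hLc : L ≤ c * ‖w‖ := by
          rw [div_le_iff₀ hwpos] at this
          linarith [this]
        calc L ≤ c * ‖w‖ := hLc
          _ < r := hr' 
    -- eventually the slope of ‖g‖ is < r
    have hsub : Tendsto (fun z => z - s) (𝓝[>] s) (𝓝[>] (0:ℝ)) := by
      rw [tendsto_nhdsWithin_iff]
      constructor
      · have h0 : Tendsto (fun z : ℝ => z - s) (𝓝 s) (𝓝 (s - s)) :=
          (continuous_id.sub continuous_const).tendsto s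
        rw [sub_self] at h0
        exact h0.mono_left nhdsWithin_le_nhds
      · filter_upwards [self_mem_nhdsWithin] with z hz
        simpa [sub_pos] using hz
    have hcomp : Tendsto (fun z => q (z - s)) (𝓝[>] s) (𝓝 L) := hLt.comp hsub
    have herr : Tendsto (fun z => ‖slope g s z - D‖) (𝓝[>] s) (𝓝 0) := by
      have h1 : Tendsto (fun z => slope g s z - D) (𝓝[>] s) (𝓝 (D - D)) :=
        hslope.sub tendsto_const_nhds
      rw [sub_self] at h1
      simpa using h1.norm
    have hsum : Tendsto (fun z => q (z - s) + ‖slope g s z - D‖) (𝓝[>] s) (𝓝 L) := by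
      simpa using hcomp.add herr
    have hev : ∀ᶠ z in 𝓝[>] s, q (z - s) + ‖slope g s z - D‖ < r :=
      hsum.eventually (Filter.Tendsto.eventually_lt_const hLr tendsto_id)
    refine ((hev.and self_mem_nhdsWithin).mono ?_).frequently
    rintro z ⟨hzr, hz⟩
    have hzs : (0:ℝ) < z - s := sub_pos.mpr hz
    have key : (z - s)⁻¹ * (‖x z - y z‖ - ‖x s - y s‖)
        ≤ q (z - s) + ‖slope g s z - D‖ := by
      have hnorm : ‖slope g s z - D‖ = (z - s)⁻¹ * ‖g z - w - (z - s) • D‖ := by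
        have hzne : z - s ≠ 0 := ne_of_gt hzs
        have heq2 : slope g s z - D = (z - s)⁻¹ • (g z - w - (z - s) • D) := by
          rw [slope_def_module, show w = g s from rfl]
          simp only [hgdef]
          match_scalars <;> field_simp
        rw [heq2, norm_smul, Real.norm_of_nonneg (inv_nonneg.mpr hzs.le)]
      have htri : ‖g z‖ ≤ ‖w + (z - s) • D‖ + ‖g z - w - (z - s) • D‖ := by
        have hdecomp : g z = (w + (z - s) • D) + (g z - w - (z - s) • D) := by module
        calc ‖g z‖ = ‖(w + (z - s) • D) + (g z - w - (z - s) • D)‖ := by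
              conv_lhs => rw [hdecomp]
          _ ≤ _ := norm_add_le _ _
      rw [hnorm, hq]
      have : ‖x z - y z‖ = ‖g z‖ := rfl
      rw [this, ← hw]
      beta_reduce
      rw [div_eq_inv_mul]
      rw [← mul_add]
      apply mul_le_mul_of_nonneg_left _ (inv_nonneg.mpr hzs.le)
      linarith [htri]
    exact lt_of_le_of_lt key hzr
  · intro s hs
    simp
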